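/- Completeness of existential Büchi ranking functions (Theorem 1, completeness direction): Let S be a type of states with a total transition relation R (every state has at least one R-successor), a set Init ⊆ S of initial states, and a Büchi specification B ⊆ S. If there exists a run π : ℕ → S (i.e., π 0 ∈ Init and R (π i) (π (i+1)) for all i) such that {i : ℕ | π i ∈ B} is infinite, then there exists a B-existential Büchi ranking function f : S → ℝ. -/

import Mathlib

/-- A run of the transition system: starts in `Init` and follows `R`. -/
def IsRun {S : Type*} (R : S → S → Prop) (Init : Set S) (π : ℕ → S) : Prop :=
  π 0 ∈ Init ∧ ∀ i, R (π i) (π (i + 1))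

/-- The pair `(s₁, s₂)` is Büchi-ranked by `f` with respect to `B`. -/
def BuchiRanked {S : Type*} (B : Set S) (f : S → ℝ) (s₁ s₂ : S) : Prop :=
  (s₁ ∈ B ∧ (f s₁ ≥ 0 → f s₂ ≥ 0)) ∨
  (s₁ ∉ B ∧ (f s₁ ≥ 0 → 0 ≤ f s₂ ∧ f s₂ ≤ f s₁ - 1))

/-- `f` is a `B`-existential Büchi ranking function. -/
def IsEBRF {S : Type*} (R : S → S → Prop) (Init B : Set S) (f : S → ℝ) : Prop :=
  (∃ s ∈ Init, f s ≥ 0) ∧ ∀ s₁, ∃ s₂, R s₁ s₂ ∧ BuchiRanked B f s₁ s₂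

/-- Completeness of existential Büchi ranking functions. -/
theorem ebrf_complete {S : Type*} (R : S → S → Prop) (Init B : Set S)
    (htotal : ∀ s, ∃ s', R s s')
    (hrun : ∃ π : ℕ → S, IsRun R Init π ∧ {i : ℕ | π i ∈ B}.Infinite) :
    ∃ f : S → ℝ, IsEBRF R Init B f := by
  classical
  obtain ⟨π, ⟨h0, hstep⟩, hinf⟩ := hrun
  have hne : ∀ i, {j | i ≤ j ∧ π j ∈ B}.Nonempty := by
    intro i
    obtain ⟨j, hj, hji⟩ := hinf.exists_gt i
    exact ⟨j, le_of_lt hji, hj⟩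
  set N : ℕ → ℕ := fun i => sInf {j | i ≤ j ∧ π j ∈ B} with hN
  have hNmem : ∀ i, i ≤ N i ∧ π (N i) ∈ B := fun i => Nat.sInf_mem (hne i)
  set D : ℕ → ℕ := fun i => N i - i with hD
  -- key step lemma
  have hkey : ∀ i, π i ∉ B → 1 ≤ D i ∧ D (i + 1) = D i - 1 := by
    intro i hiB
    have hNi : i + 1 ≤ N i := by
      rcases Nat.lt_or_ge i (N i) with h | h
      · exact h
      · exfalso
        have := (hNmem i).1
        have : N i = i := le_antisymm h this
        exact hiB (this ▸ (hNmem i).2)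
    have hsets : {j | i + 1 ≤ j ∧ π j ∈ B} = {j | i ≤ j ∧ π j ∈ B} := by
      ext j
      simp only [Set.mem_setOf_eq]
      constructor
      · rintro ⟨h1, h2⟩; exact ⟨le_trans (Nat.le_succ i) h1, h2⟩
      · rintro ⟨h1, h2⟩
        refine ⟨?_, h2⟩
        rcases Nat.lt_or_ge i j with h | h
        · exact h
        · exact absurd ((le_antisymm h h1) ▸ h2) hiB
    have hNeq : N (i + 1) = N i := by simp only [hN, hsets]
    constructor
    · simp only [hD]; omega
    · simp only [hD, hNeq]; omega
  set A : S → Set ℕ := fun s => {d | ∃ i, π i = s ∧ D i = d} with hA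
  set f : S → ℝ := fun s => if h : ∃ i, π i = s then ((sInf (A s) : ℕ) : ℝ) else -1 with hf
  have hfrange : ∀ i, f (π i) = ((sInf (A (π i)) : ℕ) : ℝ) := by
    intro i; simp only [hf]; rw [dif_pos ⟨i, rfl⟩]
  refine ⟨f, ⟨π 0, h0, by rw [hfrange 0]; positivity⟩, ?_⟩
  intro s₁
  by_cases hs : ∃ i, π i = s₁
  · have hAne : (A s₁).Nonempty := by
      obtain ⟨i, hi⟩ := hs
      exact ⟨D i, i, hi, rfl⟩
    obtain ⟨i, hi, hDi⟩ := Nat.sInf_mem hAne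
    refine ⟨π (i + 1), hi ▸ hstep i, ?_⟩
    have hf1 : f s₁ = ((D i : ℕ) : ℝ) := by
      rw [← hi, hfrange i, hi, hDi]
    have hf2le : (sInf (A (π (i+1))) : ℕ) ≤ D (i+1) :=
      Nat.sInf_le ⟨i+1, rfl, rfl⟩
    by_cases hB : s₁ ∈ B
    · left
      exact ⟨hB, fun _ => by rw [hfrange (i+1)]; positivity⟩
    · right
      refine ⟨hB, fun _ => ?_⟩
      obtain ⟨h1, h2⟩ := hkey i (hi ▸ hB)
      constructor
      · rw [hfrange (i+1)]; positivity
      · rw [hfrange (i+1), hf1]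
        have : (sInf (A (π (i+1))) : ℕ) ≤ D i - 1 := h2 ▸ hf2le
        have hcast : ((D i - 1 : ℕ) : ℝ) = (D i : ℝ) - 1 := by
          push_cast [h1]; ring
        calc ((sInf (A (π (i+1))) : ℕ) : ℝ) ≤ ((D i - 1 : ℕ) : ℝ) := by exact_mod_cast this
          _ = (D i : ℝ) - 1 := hcast
  · obtain ⟨s₂, hs₂⟩ := htotal s₁
    have hfs : f s₁ = -1 := by simp only [hf]; rw [dif_neg hs]
    have hneg : ¬ f s₁ ≥ 0 := by rw [hfs]; norm_num
    by_cases hB : s₁ ∈ B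
    · exact ⟨s₂, hs₂, Or.inl ⟨hB, fun h => absurd h hneg⟩⟩
    · exact ⟨s₂, hs₂, Or.inr ⟨hB, fun h => absurd h hneg⟩⟩
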